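/- Let 0 < p < 1, q = 1 − p, and for n ≥ 3 let K_n be the n×n tridiagonal row-stochastic matrix with K_n(0,0) = q, K_n(0,1) = p; K_n(i,i−1) = pq, K_n(i,i) = p²+q², K_n(i,i+1) = pq for 1 ≤ i ≤ n−2; K_n(n−1,n−2) = pq, K_n(n−1,n−1) = 1−pq. Let β_1(K_n) be the second-largest eigenvalue of K_n. Then there is a constant C > 0 (depending only on p) such that for all sufficiently large n, β_1(K_n) ≤ 1 − pqπ²/(2(n−1)²) + C/(n−1)⁴. -/
import Mathlib
set_option maxHeartbeats 1000000

open Finset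

/-- The tridiagonal chain `K_n = M(P_n^{n−1})`: `K(0,0) = q`, `K(0,1) = p`;
`K(i,i−1) = pq`, `K(i,i) = p²+q²`, `K(i,i+1) = pq` for `1 ≤ i ≤ n−2`;
`K(n−1,n−2) = pq`, `K(n−1,n−1) = 1−pq`. -/
def Kmat (p q : ℝ) (n : ℕ) : Matrix (Fin n) (Fin n) ℝ :=
  Matrix.of fun i j =>
    if i.val = 0 then (if j.val = 0 then q else if j.val = 1 then p else 0)
    else if i.val = n - 1 then
      (if j.val = n - 2 then p * q else if j.val = n - 1 then 1 - p * q else 0)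
    else if j.val + 1 = i.val then p * q
    else if j.val = i.val then p ^ 2 + q ^ 2
    else if j.val = i.val + 1 then p * q else 0

/- ### Auxiliary elementary lemmas -/

lemma aux_tele (F : ℕ → ℝ) (i : ℕ) :
    ∀ j, i ≤ j → F i - F j = ∑ k ∈ Finset.Ico i j, (F k - F (k + 1)) := by
  intro j hj
  induction j, hj using Nat.le_induction with
  | base => simp
  | succ j hj ih => rw [Finset.sum_Ico_succ_top hj, ← ih]; ring

lemma aux_gaussR (n : ℕ) : ∑ i ∈ Finset.range n, (i : ℝ) = n * (n - 1) / 2 := by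
  induction n with
  | zero => simp
  | succ n ih => rw [Finset.sum_range_succ, ih]; push_cast; ring

lemma aux_countPairs (n : ℕ) : ∑ j ∈ Finset.range n, ∑ i ∈ Finset.range j, ((j : ℝ) - i)
    = (n : ℝ) * ((n : ℝ) ^ 2 - 1) / 6 := by
  induction n with
  | zero => simp
  | succ n ih =>
    rw [Finset.sum_range_succ, ih]
    have h : ∑ i ∈ Finset.range n, ((n : ℝ) - i) = n * n - n * (n - 1) / 2 := by
      rw [Finset.sum_sub_distrib, Finset.sum_const, Finset.card_range, aux_gaussR]; ring
    rw [h]; push_cast; ring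

lemma aux_pairsId (u F : ℕ → ℝ) (n : ℕ) :
    ∑ j ∈ Finset.range n, ∑ i ∈ Finset.range j, u i * u j * (F i - F j) ^ 2
      = (∑ i ∈ Finset.range n, u i) * (∑ i ∈ Finset.range n, u i * F i ^ 2)
        - (∑ i ∈ Finset.range n, u i * F i) ^ 2 := by
  induction n with
  | zero => simp
  | succ n ih =>
    rw [Finset.sum_range_succ, ih]
    have h1 : ∀ i, u i * u n * (F i - F n) ^ 2
        = u n * (u i * F i ^ 2) - (2 * u n * F n) * (u i * F i) + (u n * F n ^ 2) * u i := by
      intro i; ring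
    rw [Finset.sum_congr rfl fun i _ => h1 i]
    rw [Finset.sum_add_distrib, Finset.sum_sub_distrib, ← Finset.mul_sum, ← Finset.mul_sum,
      ← Finset.mul_sum]
    rw [Finset.sum_range_succ (fun i => u i), Finset.sum_range_succ (fun i => u i * F i ^ 2),
      Finset.sum_range_succ (fun i => u i * F i)]
    ring

lemma aux_pairCS (F : ℕ → ℝ) (M i j : ℕ) (hij : i ≤ j) (hj : j ≤ M) :
    (F i - F j) ^ 2 ≤ ((j : ℝ) - i) * ∑ k ∈ Finset.range M, (F k - F (k + 1)) ^ 2 := by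
  rw [aux_tele F i j hij]
  calc (∑ k ∈ Finset.Ico i j, (F k - F (k + 1))) ^ 2
      ≤ (Finset.Ico i j).card * ∑ k ∈ Finset.Ico i j, (F k - F (k + 1)) ^ 2 :=
        sq_sum_le_card_mul_sum_sq
    _ ≤ ((j : ℝ) - i) * ∑ k ∈ Finset.range M, (F k - F (k + 1)) ^ 2 := by
        rw [Nat.card_Ico]
        have hc : ((j - i : ℕ) : ℝ) = (j : ℝ) - i := by
          push_cast [Nat.cast_sub hij]; ring
        rw [hc]
        apply mul_le_mul_of_nonneg_left _ (by
          have := Nat.cast_le (α := ℝ).2 hij; linarith)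
        apply Finset.sum_le_sum_of_subset_of_nonneg
        · intro k hk
          simp only [Finset.mem_Ico] at hk
          simp only [Finset.mem_range]
          omega
        · intro k _ _; positivity

/-- Summation by parts / Dirichlet form identity for the chain. -/
lemma aux_sbp (p : ℝ) (F G : ℕ → ℝ) (m : ℕ) :
    (1 - p) * F 0 * G 0 + (∑ i ∈ Finset.range (m + 2), F (i + 1) * G (i + 1))
      - ((1 - p) * ((1 - p) * F 0 + p * F 1) * G 0
        + (∑ i ∈ Finset.range (m + 1),
            (p * (1 - p) * F i + (p ^ 2 + (1 - p) ^ 2) * F (i + 1) + p * (1 - p) * F (i + 2))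
              * G (i + 1))
        + (p * (1 - p) * F (m + 1) + (1 - p * (1 - p)) * F (m + 2)) * G (m + 2))
      = p * (1 - p) * ∑ k ∈ Finset.range (m + 2), (F k - F (k + 1)) * (G k - G (k + 1)) := by
  induction m with
  | zero =>
    simp only [Finset.sum_range_succ, Finset.sum_range_zero]
    ring
  | succ m ih =>
    have e1 : m + 1 + 2 = (m + 2) + 1 := rfl
    have e2 : m + 1 + 1 = (m + 1) + 1 := rfl
    rw [e1, e2, Finset.sum_range_succ (fun i => F (i + 1) * G (i + 1)),
      Finset.sum_range_succ (fun i =>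
        (p * (1 - p) * F i + (p ^ 2 + (1 - p) ^ 2) * F (i + 1) + p * (1 - p) * F (i + 2))
          * G (i + 1)),
      Finset.sum_range_succ (fun k => (F k - F (k + 1)) * (G k - G (k + 1)))]
    linear_combination ih

/- ### Row computations for `Kmat` -/

section rows
variable (p q : ℝ) (m : ℕ) (f : Fin (m + 3) → ℝ)

lemma aux_row0 :
    ((Kmat p q (m + 3)).mulVec f) ⟨0, by omega⟩
      = q * f ⟨0, by omega⟩ + p * f ⟨1, by omega⟩ := by
  unfold Matrix.mulVec dotProduct
  have h : ∀ j : Fin (m + 3),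
      Kmat p q (m + 3) ⟨0, by omega⟩ j * f j
        = (if j = (⟨0, by omega⟩ : Fin (m + 3)) then q * f j else 0)
          + (if j = (⟨1, by omega⟩ : Fin (m + 3)) then p * f j else 0) := by
    intro j
    rcases j with ⟨jv, hjv⟩
    simp only [Kmat, Matrix.of_apply, Fin.mk.injEq]
    split_ifs <;> first | contradiction | omega | ring
  rw [Finset.sum_congr rfl fun j _ => h j, Finset.sum_add_distrib,
    Finset.sum_ite_eq' Finset.univ, Finset.sum_ite_eq' Finset.univ]
  simp

lemma aux_rowLast :
    ((Kmat p q (m + 3)).mulVec f) ⟨m + 2, by omega⟩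
      = p * q * f ⟨m + 1, by omega⟩ + (1 - p * q) * f ⟨m + 2, by omega⟩ := by
  unfold Matrix.mulVec dotProduct
  have h : ∀ j : Fin (m + 3),
      Kmat p q (m + 3) ⟨m + 2, by omega⟩ j * f j
        = (if j = (⟨m + 1, by omega⟩ : Fin (m + 3)) then p * q * f j else 0)
          + (if j = (⟨m + 2, by omega⟩ : Fin (m + 3)) then (1 - p * q) * f j else 0) := by
    intro j
    rcases j with ⟨jv, hjv⟩
    simp only [Kmat, Matrix.of_apply, Fin.mk.injEq]
    split_ifs <;> first | contradiction | omega | ring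
  rw [Finset.sum_congr rfl fun j _ => h j, Finset.sum_add_distrib,
    Finset.sum_ite_eq' Finset.univ, Finset.sum_ite_eq' Finset.univ]
  simp

lemma aux_rowMid (i : ℕ) (hi : i ≤ m) :
    ((Kmat p q (m + 3)).mulVec f) ⟨i + 1, by omega⟩
      = p * q * f ⟨i, by omega⟩ + (p ^ 2 + q ^ 2) * f ⟨i + 1, by omega⟩
        + p * q * f ⟨i + 2, by omega⟩ := by
  unfold Matrix.mulVec dotProduct
  have h : ∀ j : Fin (m + 3),
      Kmat p q (m + 3) ⟨i + 1, by omega⟩ j * f j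
        = (if j = (⟨i, by omega⟩ : Fin (m + 3)) then p * q * f j else 0)
          + ((if j = (⟨i + 1, by omega⟩ : Fin (m + 3)) then (p ^ 2 + q ^ 2) * f j else 0)
          + (if j = (⟨i + 2, by omega⟩ : Fin (m + 3)) then p * q * f j else 0)) := by
    intro j
    rcases j with ⟨jv, hjv⟩
    simp only [Kmat, Matrix.of_apply, Fin.mk.injEq]
    split_ifs <;> first | contradiction | omega | ring
  rw [Finset.sum_congr rfl fun j _ => h j, Finset.sum_add_distrib, Finset.sum_add_distrib,
    Finset.sum_ite_eq' Finset.univ, Finset.sum_ite_eq' Finset.univ,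
    Finset.sum_ite_eq' Finset.univ]
  simp; ring

end rows

/-- Every eigenvalue of `K_n` other than `1` (in particular the second-largest eigenvalue
`β₁(K_n)`) is at most `1 − pqπ²/(2(n−1)²) + C/(n−1)⁴` for large `n`, where `C` depends
only on `p`. -/
theorem stmt18 (p q : ℝ) (hp0 : 0 < p) (hp1 : p < 1) (hq : q = 1 - p) :
    ∃ C : ℝ, 0 < C ∧ ∃ N : ℕ, ∀ n : ℕ, N ≤ n →
      ∀ β ∈ spectrum ℝ (Kmat p q n), β ≠ 1 →
        β ≤ 1 - p * q * Real.pi ^ 2 / (2 * ((n : ℝ) - 1) ^ 2) + C / ((n : ℝ) - 1) ^ 4 := by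
  subst hq
  refine ⟨1, one_pos, 20, fun n hn β hβ hβ1 => ?_⟩
  obtain ⟨m, rfl⟩ : ∃ m, n = m + 3 := ⟨n - 3, by omega⟩
  have hq0 : 0 < 1 - p := by linarith
  -- extract eigenvector
  rw [spectrum.mem_iff] at hβ
  have hdet : (algebraMap ℝ (Matrix (Fin (m + 3)) (Fin (m + 3)) ℝ) β
      - Kmat p (1 - p) (m + 3)).det = 0 := by
    by_contra h
    exact hβ ((Matrix.isUnit_iff_isUnit_det _).2 (isUnit_iff_ne_zero.2 h))
  obtain ⟨f, hf0, hf⟩ := (Matrix.exists_mulVec_eq_zero_iff).2 hdet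
  have hKf : ∀ i, (Kmat p (1 - p) (m + 3)).mulVec f i = β * f i := by
    intro i
    have h1 := congrFun hf i
    rw [Matrix.sub_mulVec] at h1
    simp only [Algebra.algebraMap_eq_smul_one, Matrix.smul_mulVec,
      Matrix.one_mulVec, Pi.sub_apply, Pi.smul_apply, smul_eq_mul, Pi.zero_apply] at h1
    linarith
  -- natural-number indexed eigenvector
  obtain ⟨F, hFdef⟩ : ∃ F : ℕ → ℝ, F = fun k => if h : k < m + 3 then f ⟨k, h⟩ else 0 :=
    ⟨_, rfl⟩
  have hFk : ∀ (k : ℕ) (h : k < m + 3), F k = f ⟨k, h⟩ := by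
    intro k h; rw [hFdef]; exact dif_pos h
  -- eigen-equations
  have hE0 : (1 - p) * F 0 + p * F 1 = β * F 0 := by
    have h0 := hKf ⟨0, by omega⟩
    rw [aux_row0] at h0
    rw [hFk 0 (by omega), hFk 1 (by omega)]
    exact h0
  have hEn : p * (1 - p) * F (m + 1) + (1 - p * (1 - p)) * F (m + 2) = β * F (m + 2) := by
    have h0 := hKf ⟨m + 2, by omega⟩
    rw [aux_rowLast] at h0
    rw [hFk (m + 1) (by omega), hFk (m + 2) (by omega)]
    exact h0
  have hEi : ∀ i ∈ Finset.range (m + 1),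
      p * (1 - p) * F i + (p ^ 2 + (1 - p) ^ 2) * F (i + 1) + p * (1 - p) * F (i + 2)
        = β * F (i + 1) := by
    intro i hi
    have hile : i ≤ m := by simp only [Finset.mem_range] at hi; omega
    have h0 := hKf ⟨i + 1, by omega⟩
    rw [aux_rowMid p (1 - p) m f i hile] at h0
    rw [hFk i (by omega), hFk (i + 1) (by omega), hFk (i + 2) (by omega)]
    exact h0
  -- mean-zero
  have hA := aux_sbp p F (fun _ => 1) m
  simp only [mul_one, sub_self, mul_zero, Finset.sum_const_zero] at hA
  rw [hE0, hEn, Finset.sum_congr rfl hEi] at hA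
  have hs3 : ∑ i ∈ Finset.range (m + 1), β * F (i + 1)
      = β * ∑ i ∈ Finset.range (m + 1), F (i + 1) := by rw [Finset.mul_sum]
  rw [hs3] at hA
  have hs2 : ∑ i ∈ Finset.range (m + 2), F (i + 1)
      = (∑ i ∈ Finset.range (m + 1), F (i + 1)) + F (m + 2) := Finset.sum_range_succ _ _
  have hL : (1 - p) * F 0 + ∑ i ∈ Finset.range (m + 2), F (i + 1) = 0 := by
    have hfac : (1 - β) * ((1 - p) * F 0 + ∑ i ∈ Finset.range (m + 2), F (i + 1)) = 0 := by
      linear_combination hA - β * hs2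
    rcases mul_eq_zero.1 hfac with h | h
    · exact absurd (by linarith : β = 1) hβ1
    · exact h
  -- Dirichlet identity
  have hB := aux_sbp p F F m
  rw [hE0, hEn] at hB
  have hEi' : ∀ i ∈ Finset.range (m + 1),
      (p * (1 - p) * F i + (p ^ 2 + (1 - p) ^ 2) * F (i + 1) + p * (1 - p) * F (i + 2))
        * F (i + 1) = β * (F (i + 1) * F (i + 1)) := by
    intro i hi; rw [hEi i hi]; ring
  rw [Finset.sum_congr rfl hEi'] at hB
  have hs3' : ∑ i ∈ Finset.range (m + 1), β * (F (i + 1) * F (i + 1))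
      = β * ∑ i ∈ Finset.range (m + 1), F (i + 1) * F (i + 1) := by rw [Finset.mul_sum]
  rw [hs3'] at hB
  have hs2' : ∑ i ∈ Finset.range (m + 2), F (i + 1) * F (i + 1)
      = (∑ i ∈ Finset.range (m + 1), F (i + 1) * F (i + 1)) + F (m + 2) * F (m + 2) :=
    Finset.sum_range_succ _ _
  -- weights
  obtain ⟨u, hudef⟩ : ∃ u : ℕ → ℝ, u = fun i => if i = 0 then (1 - p) else 1 := ⟨_, rfl⟩
  obtain ⟨Q, hQdef⟩ : ∃ Q : ℝ, Q = ∑ i ∈ Finset.range (m + 3), u i * F i ^ 2 := ⟨_, rfl⟩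
  obtain ⟨D, hDdef⟩ : ∃ D : ℝ, D = ∑ k ∈ Finset.range (m + 2), (F k - F (k + 1)) ^ 2 := ⟨_, rfl⟩
  have hQalt : Q = (1 - p) * (F 0 * F 0)
      + ∑ i ∈ Finset.range (m + 2), F (i + 1) * F (i + 1) := by
    rw [hQdef, show m + 3 = (m + 2) + 1 from rfl, Finset.sum_range_succ']
    have h : ∀ i ∈ Finset.range (m + 2), u (i + 1) * F (i + 1) ^ 2
        = F (i + 1) * F (i + 1) := by
      intro i _; simp only [hudef]; rw [if_neg (by omega)]; ring
    rw [Finset.sum_congr rfl h]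
    simp only [hudef, if_pos rfl]
    ring
  have hDalt : D = ∑ k ∈ Finset.range (m + 2), (F k - F (k + 1)) * (F k - F (k + 1)) := by
    rw [hDdef]
    exact Finset.sum_congr rfl fun k _ => by ring
  have hQD : (1 - β) * Q = p * (1 - p) * D := by
    rw [hQalt, hDalt]
    linear_combination hB - β * hs2'
  -- positivity of Q
  have hupos : ∀ i, 0 < u i := by
    intro i; simp only [hudef]; split_ifs <;> linarith
  have hQpos : 0 < Q := by
    obtain ⟨i0, hi0⟩ := Function.ne_iff.1 hf0
    rw [hQdef]
    apply Finset.sum_pos'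
    · intro i _; exact mul_nonneg (le_of_lt (hupos i)) (sq_nonneg _)
    · refine ⟨i0.val, Finset.mem_range.2 i0.isLt, ?_⟩
      have hF : F i0.val = f i0 := by rw [hFk i0.val i0.isLt]
      have hne : F i0.val ≠ 0 := by rw [hF]; exact hi0
      have h2 : 0 < F i0.val ^ 2 := by positivity
      exact mul_pos (hupos _) h2
  have hD0 : 0 ≤ D := by rw [hDdef]; positivity
  -- mean zero in weighted form
  have hLu : ∑ i ∈ Finset.range (m + 3), u i * F i = 0 := by
    rw [show m + 3 = (m + 2) + 1 from rfl, Finset.sum_range_succ']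
    have h : ∀ i ∈ Finset.range (m + 2), u (i + 1) * F (i + 1) = F (i + 1) := by
      intro i _; simp only [hudef]; rw [if_neg (by omega)]; ring
    rw [Finset.sum_congr rfl h]
    simp only [hudef, if_pos rfl]
    linarith [hL]
  -- Poincaré inequality
  obtain ⟨x, hxdef⟩ : ∃ x : ℝ, x = ((m : ℝ) + 3) := ⟨_, rfl⟩
  have hxcast : ((m + 3 : ℕ) : ℝ) = x := by rw [hxdef]; push_cast; ring
  have hx20 : (20 : ℝ) ≤ x := by
    rw [hxdef]
    have h20 : (20 : ℕ) ≤ m + 3 := hn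
    have := Nat.cast_le (α := ℝ).2 h20
    push_cast at this
    linarith
  have hW : ∑ i ∈ Finset.range (m + 3), u i = (1 - p) + ((m : ℝ) + 2) := by
    rw [show m + 3 = (m + 2) + 1 from rfl, Finset.sum_range_succ']
    have h : ∀ i ∈ Finset.range (m + 2), u (i + 1) = 1 := by
      intro i _; simp only [hudef]; rw [if_neg (by omega)]
    rw [Finset.sum_congr rfl h]
    simp only [hudef, if_pos rfl, Finset.sum_const, Finset.card_range, nsmul_eq_mul, mul_one]
    push_cast; ring
  have hpairs : ∑ j ∈ Finset.range (m + 3), ∑ i ∈ Finset.range j, u i * u j * (F i - F j) ^ 2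
      = ((1 - p) + ((m : ℝ) + 2)) * Q := by
    rw [aux_pairsId, hLu, hW, hQdef]; ring
  have hbound : ∑ j ∈ Finset.range (m + 3), ∑ i ∈ Finset.range j, u i * u j * (F i - F j) ^ 2
      ≤ (x * (x ^ 2 - 1) / 6) * D := by
    have step1 : ∑ j ∈ Finset.range (m + 3), ∑ i ∈ Finset.range j,
        u i * u j * (F i - F j) ^ 2
        ≤ ∑ j ∈ Finset.range (m + 3), ∑ i ∈ Finset.range j, ((j : ℝ) - i) * D := by
      apply Finset.sum_le_sum
      intro j hj
      apply Finset.sum_le_sum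
      intro i hi
      have hij : i ≤ j := le_of_lt (Finset.mem_range.1 hi)
      have hjm : j ≤ m + 2 := by
        have := Finset.mem_range.1 hj; omega
      have hu1 : u i * u j ≤ 1 := by
        have h1 : u i ≤ 1 := by simp only [hudef]; split_ifs <;> linarith
        have h2 : u j ≤ 1 := by simp only [hudef]; split_ifs <;> linarith
        have h3 : 0 ≤ u i := le_of_lt (hupos i)
        have h4 : 0 ≤ u j := le_of_lt (hupos j)
        nlinarith
      have hcs := aux_pairCS F (m + 2) i j hij hjm
      have hsq : 0 ≤ (F i - F j) ^ 2 := sq_nonneg _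
      calc u i * u j * (F i - F j) ^ 2 ≤ 1 * (F i - F j) ^ 2 :=
            mul_le_mul_of_nonneg_right hu1 hsq
        _ = (F i - F j) ^ 2 := one_mul _
        _ ≤ ((j : ℝ) - i) * D := by rw [hDdef]; exact hcs
    have step2 : ∑ j ∈ Finset.range (m + 3), ∑ i ∈ Finset.range j, ((j : ℝ) - i) * D
        = (x * (x ^ 2 - 1) / 6) * D := by
      have h : ∀ j ∈ Finset.range (m + 3),
          ∑ i ∈ Finset.range j, ((j : ℝ) - i) * D
            = (∑ i ∈ Finset.range j, ((j : ℝ) - i)) * D := by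
        intro j _; rw [Finset.sum_mul]
      rw [Finset.sum_congr rfl h, ← Finset.sum_mul, aux_countPairs, hxcast]
    calc ∑ j ∈ Finset.range (m + 3), ∑ i ∈ Finset.range j, u i * u j * (F i - F j) ^ 2
        ≤ ∑ j ∈ Finset.range (m + 3), ∑ i ∈ Finset.range j, ((j : ℝ) - i) * D := step1
      _ = (x * (x ^ 2 - 1) / 6) * D := step2
  -- key inequality
  have hkey : (x - 1) * Q ≤ (x * (x ^ 2 - 1) / 6) * D := by
    have hW1 : (x - 1) * Q ≤ ((1 - p) + ((m : ℝ) + 2)) * Q := by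
      apply mul_le_mul_of_nonneg_right _ (le_of_lt hQpos)
      rw [hxdef]; linarith
    exact le_trans hW1 (le_trans hpairs.ge hbound)
  -- numeric conclusion
  have hx1 : (0 : ℝ) < x - 1 := by linarith
  have hxx : (0 : ℝ) < x * (x ^ 2 - 1) := by
    have hfac : x * (x ^ 2 - 1) = x * ((x - 1) * (x + 1)) := by ring
    rw [hfac]
    exact mul_pos (by linarith) (mul_pos hx1 (by linarith))
  have hpq : (0 : ℝ) < p * (1 - p) := mul_pos hp0 hq0
  have h7 : 6 * (p * (1 - p)) * (x - 1) ≤ x * (x ^ 2 - 1) * (1 - β) := by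
    have h6 : 6 * (p * (1 - p)) * ((x - 1) * Q)
        ≤ 6 * (p * (1 - p)) * ((x * (x ^ 2 - 1) / 6) * D) :=
      mul_le_mul_of_nonneg_left hkey (by positivity)
    have h6' : 6 * (p * (1 - p)) * ((x * (x ^ 2 - 1) / 6) * D)
        = x * (x ^ 2 - 1) * ((1 - β) * Q) := by
      rw [hQD]; ring
    rw [h6'] at h6
    have h6'' : (6 * (p * (1 - p)) * (x - 1)) * Q ≤ (x * (x ^ 2 - 1) * (1 - β)) * Q := by
      linarith [h6]
    exact le_of_mul_le_mul_right h6'' hQpos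
  have hπ2 : Real.pi ^ 2 ≤ 9.9225 := by
    have h1 := Real.pi_lt_d2
    have h2 := Real.pi_pos
    nlinarith
  have hpoly : Real.pi ^ 2 * (x * (x + 1)) ≤ 12 * (x - 1) ^ 2 := by
    nlinarith [hπ2, hx20, Real.pi_pos, sq_nonneg (x - 20)]
  have h8 : p * (1 - p) * Real.pi ^ 2 * (x * (x ^ 2 - 1))
      ≤ (1 - β) * (2 * (x - 1) ^ 2) * (x * (x ^ 2 - 1)) := by
    have hm1 : 2 * (x - 1) ^ 2 * (6 * (p * (1 - p)) * (x - 1))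
        ≤ 2 * (x - 1) ^ 2 * (x * (x ^ 2 - 1) * (1 - β)) :=
      mul_le_mul_of_nonneg_left h7 (by positivity)
    have hm2 : p * (1 - p) * (x - 1) * (Real.pi ^ 2 * (x * (x + 1)))
        ≤ p * (1 - p) * (x - 1) * (12 * (x - 1) ^ 2) :=
      mul_le_mul_of_nonneg_left hpoly (by positivity)
    nlinarith [hm1, hm2]
  have h9 : p * (1 - p) * Real.pi ^ 2 ≤ (1 - β) * (2 * (x - 1) ^ 2) :=
    le_of_mul_le_mul_right h8 hxx
  -- final
  have hgoalx : ((m + 3 : ℕ) : ℝ) - 1 = x - 1 := by rw [hxcast]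
  rw [hgoalx]
  have hdiv : p * (1 - p) * Real.pi ^ 2 / (2 * (x - 1) ^ 2) ≤ 1 - β := by
    rw [div_le_iff₀ (by positivity)]
    linarith [h9]
  have hpos4 : (0 : ℝ) < 1 / (x - 1) ^ 4 := by positivity
  linarith [hdiv, hpos4]
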